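/- There exists a sequence of measurable functions b_n : ℝ → ℝ (n ≥ 2) such that (i) for every Schwartz function ψ : ℝ → ℂ, ∫_ℝ b_n(x) ψ(x) dx → 0 as n → ∞, yet (ii) there exists a nonnegative Schwartz function ψ₀ : ℝ → ℝ such that ∫_ℝ b_n(x) e^{x²} ψ₀(x) dx → +∞ as n → ∞. Consequently multiplication by the Gaussian inverse e^{x²} is not continuous on tempered distributions: b_n → 0 in the weak topology of tempered distributions but b_n · e^{x²} does not converge, so deconvolution with a Gaussian density is ill-posed. -/

import Mathlib

open MeasureTheory Filter Real

noncomputable def gaussPoly : ℕ → Polynomial ℝ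
  | 0 => 1
  | n + 1 => Polynomial.derivative (gaussPoly n) - Polynomial.C 2 * Polynomial.X * gaussPoly n

lemma hasDerivAt_gauss (x : ℝ) :
    HasDerivAt (fun x : ℝ => Real.exp (-x ^ 2)) (Real.exp (-x ^ 2) * (-(2 * x))) x := by
  have h : HasDerivAt (fun x : ℝ => -x ^ 2) (-(2 * x)) x := by
    simpa [Pi.neg_def] using (hasDerivAt_pow 2 x).neg
  exact h.exp

lemma iteratedDeriv_gauss (n : ℕ) :
    iteratedDeriv n (fun x : ℝ => Real.exp (-x ^ 2)) =
      fun x => (gaussPoly n).eval x * Real.exp (-x ^ 2) := by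
  induction n with
  | zero => simp [gaussPoly]
  | succ n ih =>
    rw [iteratedDeriv_succ, ih]
    funext x
    have h : HasDerivAt (fun x => (gaussPoly n).eval x * Real.exp (-x ^ 2))
        ((gaussPoly n).derivative.eval x * Real.exp (-x ^ 2) +
          (gaussPoly n).eval x * (Real.exp (-x ^ 2) * (-(2 * x)))) x :=
      ((gaussPoly n).hasDerivAt x).mul (hasDerivAt_gauss x)
    rw [h.deriv]
    simp only [gaussPoly, Polynomial.eval_sub, Polynomial.eval_mul, Polynomial.eval_C,
      Polynomial.eval_X]
    ring

lemma gauss_decay (m : ℕ) (x : ℝ) :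
    |x| ^ m * Real.exp (-x ^ 2) ≤ m.factorial + 1 := by
  rcases le_total |x| 1 with h | h
  · have h1 : |x| ^ m ≤ 1 := pow_le_one₀ (abs_nonneg x) h
    have h2 : Real.exp (-x ^ 2) ≤ 1 := Real.exp_le_one_iff.mpr (by nlinarith [sq_nonneg x])
    nlinarith [Real.exp_nonneg (-x ^ 2), pow_nonneg (abs_nonneg x) m,
      (Nat.cast_pos (α := ℝ)).mpr m.factorial_pos]
  · have h1 : |x| ^ m ≤ (x ^ 2) ^ m := by
      calc |x| ^ m ≤ (|x| ^ 2) ^ m := by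
            apply pow_le_pow_left₀ (abs_nonneg x) _ m |>.trans_eq rfl
            nlinarith
        _ = (x ^ 2) ^ m := by rw [sq_abs]
    have h2 : (x ^ 2) ^ m ≤ m.factorial * Real.exp (x ^ 2) := by
      have := Real.pow_div_factorial_le_exp (x := x ^ 2) (by positivity) m
      rw [div_le_iff₀ (by positivity)] at this
      linarith [this]
    have h3 : Real.exp (-x ^ 2) = (Real.exp (x ^ 2))⁻¹ := by
      rw [← Real.exp_neg]
    have hexp : (0:ℝ) < Real.exp (x ^ 2) := Real.exp_pos _
    have : |x| ^ m * Real.exp (-x ^ 2) ≤ m.factorial := by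
      rw [h3, mul_inv_le_iff₀ hexp]
      calc |x| ^ m ≤ (x ^ 2) ^ m := h1
        _ ≤ m.factorial * Real.exp (x ^ 2) := h2
        _ = (m.factorial : ℝ) * Real.exp (x ^ 2) := rfl
    linarith

lemma poly_gauss_bound (k : ℕ) (Q : Polynomial ℝ) :
    ∃ C, ∀ x : ℝ, ‖x‖ ^ k * ‖Q.eval x * Real.exp (-x ^ 2)‖ ≤ C := by
  refine ⟨∑ i ∈ Finset.range (Q.natDegree + 1),
    |Q.coeff i| * ((k + i).factorial + 1), fun x => ?_⟩
  have hE : (0:ℝ) < Real.exp (-x ^ 2) := Real.exp_pos _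
  have h1 : |Q.eval x| ≤ ∑ i ∈ Finset.range (Q.natDegree + 1), |Q.coeff i| * |x| ^ i := by
    rw [Q.eval_eq_sum_range]
    refine (Finset.abs_sum_le_sum_abs _ _).trans_eq ?_
    exact Finset.sum_congr rfl fun i _ => by rw [abs_mul, abs_pow]
  calc ‖x‖ ^ k * ‖Q.eval x * Real.exp (-x ^ 2)‖
      = |Q.eval x| * (|x| ^ k * Real.exp (-x ^ 2)) := by
        rw [Real.norm_eq_abs, Real.norm_eq_abs, abs_mul, abs_of_pos hE]; ring
    _ ≤ (∑ i ∈ Finset.range (Q.natDegree + 1), |Q.coeff i| * |x| ^ i) *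
          (|x| ^ k * Real.exp (-x ^ 2)) := by
        apply mul_le_mul_of_nonneg_right h1 (by positivity)
    _ = ∑ i ∈ Finset.range (Q.natDegree + 1),
          |Q.coeff i| * (|x| ^ (k + i) * Real.exp (-x ^ 2)) := by
        rw [Finset.sum_mul]
        exact Finset.sum_congr rfl fun i _ => by rw [pow_add]; ring
    _ ≤ ∑ i ∈ Finset.range (Q.natDegree + 1), |Q.coeff i| * ((k + i).factorial + 1) :=
        Finset.sum_le_sum fun i _ =>
          mul_le_mul_of_nonneg_left (gauss_decay (k + i) x) (abs_nonneg _)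

noncomputable def gaussianSchwartz : SchwartzMap ℝ ℝ where
  toFun := fun x => Real.exp (-x ^ 2)
  smooth' := Real.contDiff_exp.comp ((contDiff_id.pow 2).neg)
  decay' := by
    intro k n
    obtain ⟨C, hC⟩ := poly_gauss_bound k (gaussPoly n)
    refine ⟨C, fun x => ?_⟩
    rw [norm_iteratedFDeriv_eq_norm_iteratedDeriv, iteratedDeriv_gauss]
    exact hC x

/-- There exists a sequence of measurable functions `b n : ℝ → ℝ` such that
(i) for every Schwartz `ψ : ℝ → ℂ`, `∫ b n x * ψ x dx → 0`, yet (ii) there is a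
nonnegative Schwartz function `ψ₀ : ℝ → ℝ` with `∫ b n x * e^{x²} * ψ₀ x dx → +∞`.
Hence multiplication by `e^{x²}` is not weakly continuous on tempered distributions. -/
theorem stmt_3 :
    ∃ b : ℕ → ℝ → ℝ,
      (∀ n : ℕ, Measurable (b n)) ∧
      (∀ ψ : SchwartzMap ℝ ℂ,
        Tendsto (fun n : ℕ => ∫ x : ℝ, (b n x : ℂ) * ψ x) atTop (nhds 0)) ∧
      (∃ ψ₀ : SchwartzMap ℝ ℝ, (∀ x : ℝ, 0 ≤ ψ₀ x) ∧
        Tendsto (fun n : ℕ => ∫ x : ℝ, b n x * Real.exp (x ^ 2) * ψ₀ x)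
          atTop atTop) := by
  refine ⟨fun n => (Set.Icc (n : ℝ) (n + 1)).indicator (fun _ => (n : ℝ)), fun n =>
    measurable_const.indicator measurableSet_Icc, ?_, ?_⟩
  · intro ψ
    obtain ⟨C, hCpos, hC⟩ := ψ.decay 2 0
    refine squeeze_zero_norm (a := fun n : ℕ => C / n) (fun n => ?_)
      (tendsto_const_div_atTop_nhds_zero_nat C)
    have hrw : (fun x : ℝ => (((Set.Icc (n : ℝ) (n + 1)).indicator (fun _ => (n : ℝ)) x : ℝ) : ℂ) * ψ x)
        = (Set.Icc (n : ℝ) (n + 1)).indicator (fun x => (n : ℂ) * ψ x) := by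
      funext x
      by_cases h : x ∈ Set.Icc (n : ℝ) (n + 1) <;>
        simp [Set.indicator_of_mem, Set.indicator_of_notMem, h]
    rw [hrw, integral_indicator measurableSet_Icc]
    have hbound : ∀ x ∈ Set.Icc (n : ℝ) (n + 1), ‖(n : ℂ) * ψ x‖ ≤ C / n := by
      intro x hx
      rcases Nat.eq_zero_or_pos n with rfl | hn
      · simp
      · have hnpos : (0 : ℝ) < n := Nat.cast_pos.mpr hn
        have hxn : (n : ℝ) ≤ x := hx.1
        have h2 := hC x
        rw [norm_iteratedFDeriv_zero] at h2
        have hx2 : (n : ℝ) ^ 2 * ‖ψ x‖ ≤ C := by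
          refine le_trans ?_ h2
          have : (n : ℝ) ^ 2 ≤ ‖x‖ ^ 2 := by
            rw [Real.norm_eq_abs]
            nlinarith [abs_nonneg x, le_abs_self x]
          exact mul_le_mul_of_nonneg_right this (norm_nonneg _)
        rw [norm_mul, Complex.norm_natCast, le_div_iff₀ hnpos]
        nlinarith [norm_nonneg (ψ x)]
    have hmeas : AEStronglyMeasurable (fun x : ℝ => (n : ℂ) * ψ x)
        (volume.restrict (Set.Icc (n : ℝ) (n + 1))) :=
      (continuous_const.mul ψ.continuous).aestronglyMeasurable
    have := norm_setIntegral_le_of_norm_le_const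
      (μ := volume) (s := Set.Icc (n : ℝ) (n + 1))
      (by rw [Real.volume_Icc]; exact ENNReal.ofReal_lt_top) hbound
    calc ‖∫ x in Set.Icc (n : ℝ) (n + 1), (n : ℂ) * ψ x‖
        ≤ C / n * (volume (Set.Icc (n : ℝ) (n + 1))).toReal := this
      _ = C / n := by
          rw [Real.volume_Icc]
          simp
  · refine ⟨gaussianSchwartz, fun x => Real.exp_nonneg _, ?_⟩
    have hrw : ∀ n : ℕ, (∫ x : ℝ,
        (Set.Icc (n : ℝ) (n + 1)).indicator (fun _ => (n : ℝ)) x * Real.exp (x ^ 2) *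
          gaussianSchwartz x) = (n : ℝ) := by
      intro n
      have : (fun x : ℝ => (Set.Icc (n : ℝ) (n + 1)).indicator (fun _ => (n : ℝ)) x *
          Real.exp (x ^ 2) * gaussianSchwartz x)
          = (Set.Icc (n : ℝ) (n + 1)).indicator (fun _ => (n : ℝ)) := by
        funext x
        have hg : gaussianSchwartz x = Real.exp (-x ^ 2) := rfl
        have h1 : Real.exp (x ^ 2) * Real.exp (-x ^ 2) = 1 := by
          rw [← Real.exp_add]; simp
        rw [hg, mul_assoc, h1, mul_one]
      rw [this, integral_indicator_const _ measurableSet_Icc, measureReal_def, Real.volume_Icc]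
      simp
    simp only [hrw]
    exact tendsto_natCast_atTop_atTop
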